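/- For any Dyck words x and y, the bit-flip permutation satisfies π(xy) = (π(x), |x| + π(y)), i.e., π of the concatenation is the concatenation of π(x) with the entrywise shift of π(y) by |x|. -/

import Mathlib

/-- `x ∈ B_k`: bitstring of length `2k` with weight `k` or `k+1`. -/
def inB (k : ℕ) (x : List Bool) : Prop :=
  x.length = 2*k ∧ (x.count true = k ∨ x.count true = k+1)

/-- Dyck word: equally many 1s and 0s, every prefix has at least as many 1s as 0s. -/
def isDyck (x : List Bool) : Prop :=
  x.count true = x.count false ∧ ∀ n, (x.take n).count false ≤ (x.take n).count true

/-- Complement of the reverse. -/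
def mirror (x : List Bool) : List Bool := x.reverse.map (fun b => !b)

/-- Bitwise complement. -/
def compl (x : List Bool) : List Bool := x.map (fun b => !b)

/-- Specification of the recursively defined bit-flip sequence `π`. -/
def IsPiFun (π : List Bool → List ℕ) : Prop :=
  π [] = [] ∧ ∀ u v : List Bool, isDyck u → isDyck v →
    π (true :: u ++ false :: v) =
      (u.length + 2) :: ((π (mirror u)).map (fun a => u.length + 2 - a))
        ++ 1 :: ((π v).map (fun a => u.length + 2 + a))

/-- Flip the bit at (1-indexed) position `a`. -/
def flipBit (y : List Bool) (a : ℕ) : List Bool := y.set (a-1) (!(y.getD (a-1) false))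

/-- The path `P(x)`, as the list of vertices obtained by flipping bits in order `π x`. -/
def pathOf (π : List Bool → List ℕ) (x : List Bool) : List (List Bool) :=
  List.scanl flipBit x (π x)

/-- Adjacency in `G_k`: both vertices in `B_k`, differing in exactly one position. -/
def GkAdj (k : ℕ) (x y : List Bool) : Prop :=
  inB k x ∧ inB k y ∧ (List.range (2*k)).countP (fun i => x.getD i false != y.getD i false) = 1

/-- Adjacency in `G_k^+`: a `G_k` edge or a complement edge. -/
def GkPlusAdj (k : ℕ) (x y : List Bool) : Prop :=
  GkAdj k x y ∨ (inB k x ∧ inB k y ∧ (y = compl x ∨ x = compl y))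

lemma count_tf (l : List Bool) : l.count true + l.count false = l.length := by
  induction l with
  | nil => simp
  | cons a t ih => cases a <;> simp [List.count_cons] <;> omega

lemma dyck_append {x y : List Bool} (hx : isDyck x) (hy : isDyck y) : isDyck (x ++ y) := by
  constructor
  · simp [List.count_append, hx.1, hy.1]
  · intro n
    rw [List.take_append]
    simp only [List.count_append]
    exact Nat.add_le_add (hx.2 n) (hy.2 _)

lemma dyck_decomp {x : List Bool} (hne : x ≠ []) (hx : isDyck x) :
    ∃ u v, isDyck u ∧ isDyck v ∧ x = true :: u ++ false :: v := by
  have hlenpos : 0 < x.length := List.length_pos_iff.2 hne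
  have hP : 0 < x.length ∧ (x.take x.length).count false = (x.take x.length).count true := by
    simpa [hx.1] using hlenpos
  set P : ℕ → Prop := fun m => 0 < m ∧ (x.take m).count false = (x.take m).count true with hPdef
  have hPex : ∃ m, P m := ⟨x.length, hP⟩
  set n := Nat.find hPex with hn
  have hnspec : P n := Nat.find_spec hPex
  have hnle : n ≤ x.length := Nat.find_min' hPex hP
  have hstrict : ∀ m, 0 < m → m < n → (x.take m).count false < (x.take m).count true := by
    intro m hm hmn
    have h1 := hx.2 m
    have h2 := Nat.find_min hPex hmn
    simp only [hPdef, hm, true_and, not_and] at h2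
    omega
  have hsum : ∀ m, m ≤ x.length →
      (x.take m).count true + (x.take m).count false = m := by
    intro m hm
    have := count_tf (x.take m)
    rwa [List.length_take, min_eq_left hm] at this
  clear_value n
  -- n ≥ 2
  have hn2 : 2 ≤ n := by
    have h1 := hsum n hnle
    have := hnspec.2
    have := hnspec.1
    omega
  have hn1len : n - 1 < x.length := by omega
  -- head is true
  have hhead : x[0] = true := by
    by_contra h
    have h0 : x[0] = false := by simpa using h
    have h1 : x.take 1 = [false] := by
      rw [List.take_succ]
      simp [List.getElem?_eq_getElem hlenpos, h0]
    have := hstrict 1 one_pos (by omega)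
    rw [h1] at this
    simp at this
  -- bit at n-1 is false
  have htaken : x.take n = x.take (n-1) ++ [x[n-1]] := by
    have : n = (n-1) + 1 := by omega
    conv_lhs => rw [this]
    rw [List.take_succ, List.getElem?_eq_getElem hn1len]
    simp
  have hbit : x[n-1] = false := by
    by_contra h
    have hb : x[n-1] = true := by simpa using h
    have hs := hstrict (n-1) (by omega) (by omega)
    have he := hnspec.2
    rw [htaken, hb] at he
    simp [List.count_append] at he
    omega
  have hct : (x.take (n-1)).count true = (x.take (n-1)).count false + 1 := by
    have he := hnspec.2
    rw [htaken, hbit] at he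
    simp [List.count_append] at he
    omega
  -- the decomposition
  set u : List Bool := (x.drop 1).take (n-2) with hu
  set v : List Bool := x.drop n with hv
  have hlenu : u.length = n - 2 := by
    rw [hu, List.length_take, List.length_drop]
    omega
  have hxeq : x = true :: u ++ false :: v := by
    have h1 : x = x.take 1 ++ x.drop 1 := (List.take_append_drop 1 x).symm
    have h2 : x.take 1 = [true] := by
      rw [List.take_succ, List.getElem?_eq_getElem hlenpos, hhead]
      simp
    have h3 : x.drop 1 = u ++ (x.drop 1).drop (n-2) := (List.take_append_drop _ _).symm
    have h4 : (x.drop 1).drop (n-2) = x.drop (n-1) := by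
      rw [List.drop_drop]
      congr 1
      omega
    have h5 : x.drop (n-1) = false :: v := by
      rw [List.drop_eq_getElem_cons hn1len, hbit, hv]
      have hh : n - 1 + 1 = n := by omega
      rw [hh]
    calc x = x.take 1 ++ x.drop 1 := h1
    _ = [true] ++ (u ++ (x.drop 1).drop (n-2)) := by rw [h2, ← h3]
    _ = [true] ++ (u ++ (false :: v)) := by rw [h4, h5]
    _ = true :: u ++ false :: v := by simp
  have htake1 : ∀ m, m ≤ u.length → x.take (m+1) = true :: u.take m := by
    intro m hm
    rw [hxeq]
    simp [List.take_append, Nat.sub_eq_zero_of_le hm,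
      Nat.sub_eq_zero_of_le (Nat.le_succ_of_le hm)]
  have htaken1 : x.take (n-1) = true :: u := by
    have h := htake1 u.length le_rfl
    rw [List.take_length] at h
    have key : u.length + 1 = n - 1 := by rw [hlenu]; omega
    rw [key] at h
    exact h
  have hcu : u.count true = u.count false := by
    rw [htaken1] at hct
    simp [List.count_cons] at hct
    omega
  have hdu : isDyck u := by
    refine ⟨hcu, fun m => ?_⟩
    set m' := min m u.length with hm'
    have hmm : u.take m = u.take m' := by
      rw [List.take_eq_take_iff]
      omega
    have hs := hstrict (m'+1) (Nat.succ_pos _) (by omega)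
    rw [htake1 m' (min_le_right _ _)] at hs
    simp [List.count_cons] at hs
    rw [hmm]
    omega
  have htake2 : ∀ m, x.take (n + m) = true :: u ++ false :: v.take m := by
    intro m
    rw [hxeq]
    have h1 : u.length ≤ n + m - 1 := by omega
    have h2 : n + m - 1 - u.length = m + 1 := by omega
    have h3 : n + m = (n + m - 1) + 1 := by omega
    conv_lhs => rw [h3]
    simp [List.take_cons, List.take_append, List.take_of_length_le h1, h2]
  have hdv : isDyck v := by
    constructor
    · have := hx.1
      rw [hxeq] at this
      simp [List.count_cons] at this
      omega
    · intro m
      have hs := hx.2 (n + m)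
      rw [htake2 m] at hs
      simp [List.count_cons, List.count_append] at hs
      omega
  exact ⟨u, v, hdu, hdv, hxeq⟩


lemma key (π : List Bool → List ℕ) (hπ : IsPiFun π) :
    ∀ n x y, x.length = n → isDyck x → isDyck y →
    π (x ++ y) = π x ++ (π y).map (fun a => x.length + a) := by
  intro n
  induction n using Nat.strong_induction_on with
  | _ n ih =>
    intro x y hlen hx hy
    rcases eq_or_ne x [] with h | h
    · subst h; simp [hπ.1]
    · obtain ⟨u, v, hu, hv, hxeq⟩ := dyck_decomp h hx
      have hvy : isDyck (v ++ y) := dyck_append hv hy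
      have hvlt : v.length < n := by rw [← hlen, hxeq]; simp; omega
      have h1 : x ++ y = true :: u ++ false :: (v ++ y) := by rw [hxeq]; simp
      rw [h1, hπ.2 u (v++y) hu hvy, hxeq, hπ.2 u v hu hv,
        ih v.length hvlt v y rfl hv hy]
      simp only [List.map_append, List.map_map, List.cons_append, List.append_assoc,
        List.length_cons, List.length_append, Function.comp_def]
      have hf : (fun a => u.length + 2 + (v.length + a)) =
          (fun a : ℕ => u.length + (v.length + 1) + 1 + a) := by
        funext a; omega
      rw [hf]

theorem stmt_9 (π : List Bool → List ℕ) (hπ : IsPiFun π) (x y : List Bool)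
    (hx : isDyck x) (hy : isDyck y) :
    π (x ++ y) = π x ++ (π y).map (fun a => x.length + a) := by
  exact key π hπ x.length x y rfl hx hy
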